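/- Suppose a reduced computation W_0 → … → W_t of the S-machine M2 starts with an admissible word W_0 having no letters from the alphabets X_{i,ℓ} (respectively, no letters from the alphabets X_{i,r}). Assume the length of its base B is bounded above by a constant N_0 and that B contains a history subword Q_{i,ℓ} Q_{i,r}. Then there is a constant c = c(N_0) such that |W_0|_Y ≤ c |W_t|_Y. -/

import Mathlib

namespace SM

/-- The hardware of an `S`-machine: a set `Q` of state letters, each belonging to a part
(the parts of the standard base are indexed by integer positions, `part q` being the
position of the part containing `q`), and a set `A` of tape letters, each belonging to
the alphabet of one sector (`sec y = i` means that `y` is a tape letter of the sector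
lying between the parts in positions `i` and `i + 1`). -/
structure Hardware where
  Q : Type
  A : Type
  part : Q → ℤ
  sec : A → ℤ

/-- An admissible word with `k + 1` state letters: `st i` is the `i`-th (signed) state
letter and `w i` is the (reduced) tape word between the `i`-th and `(i+1)`-st state
letters. -/
structure Conf (h : Hardware) (k : ℕ) where
  st : Fin (k + 1) → h.Q × Bool
  w : Fin k → FreeGroup h.A

/-- A rule of an `S`-machine: the part in position `p` has the component
`src p → (a p) (tgt p) (b p)`, and `allow` is the set `Y(θ)` of tape letters allowed in
the admissible words of its domain. -/
structure Rule (h : Hardware) where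
  src : ℤ → h.Q
  tgt : ℤ → h.Q
  a : ℤ → FreeGroup h.A
  b : ℤ → FreeGroup h.A
  allow : h.A → Prop

/-- the index of the sector lying immediately to the right of a signed state letter -/
def rightSec (h : Hardware) (x : h.Q × Bool) : ℤ :=
  if x.2 then h.part x.1 else h.part x.1 - 1

/-- the condition on two consecutive (signed) state letters of an admissible word -/
def adj (h : Hardware) (x x' : h.Q × Bool) : Prop :=
  (x'.2 = x.2 ∧
    h.part x'.1 = (if x.2 then h.part x.1 + 1 else h.part x.1 - 1)) ∨
  x' = (x.1, !x.2)

/-- `W` is an admissible word: consecutive state letters obey the adjacency conditions,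
every tape letter lies in the alphabet of its sector, and the word is reduced. -/
def Admissible (h : Hardware) [DecidableEq h.A] {k : ℕ} (W : Conf h k) : Prop :=
  (∀ i : Fin k, adj h (W.st i.castSucc) (W.st i.succ)) ∧
  (∀ i : Fin k, ∀ l ∈ (W.w i).toWord, h.sec l.1 = rightSec h (W.st i.castSucc)) ∧
  (∀ i : Fin k, W.st i.succ = ((W.st i.castSucc).1, !(W.st i.castSucc).2) →
    W.w i ≠ 1)

variable {h : Hardware}

/-- the word contributed by a rule immediately to the right of a signed state letter -/
def Rmul (θ : Rule h) (x : h.Q × Bool) : FreeGroup h.A :=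
  if x.2 then θ.b (h.part x.1) else (θ.a (h.part x.1))⁻¹

/-- the word contributed by a rule immediately to the left of a signed state letter -/
def Lmul (θ : Rule h) (x : h.Q × Bool) : FreeGroup h.A :=
  if x.2 then θ.a (h.part x.1) else (θ.b (h.part x.1))⁻¹

/-- One application of a rule `θ` to an admissible word `W`, producing `W'`: all state
letters of `W` are source letters of `θ`, all tape letters of `W` are allowed by `θ`,
each state letter is replaced as prescribed by `θ`, and the tape words are multiplied by
the corresponding words (with free reduction, which is automatic in the free group, and
trimming of the first and last tape letters, which is built into the sector
representation). -/
def Apply [DecidableEq h.A] (θ : Rule h) {k : ℕ} (W W' : Conf h k) : Prop :=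
  (∀ i, (W.st i).1 = θ.src (h.part (W.st i).1)) ∧
  (∀ i, W'.st i = (θ.tgt (h.part (W.st i).1), (W.st i).2)) ∧
  (∀ i : Fin k, ∀ l ∈ (W.w i).toWord, θ.allow l.1) ∧
  (∀ i : Fin k, W'.w i = Rmul θ (W.st i.castSucc) * W.w i * Lmul θ (W.st i.succ))

/-- the `Y`-length `|W|_Y` of an admissible word: the number of its tape letters -/
def lenY [DecidableEq h.A] {k : ℕ} (W : Conf h k) : ℕ :=
  ∑ i : Fin k, (W.w i).toWord.length

end SM

namespace M2

/-- tape letters of `M₂`: `Sum.inl y` is a letter of one of the working alphabets `Y_i`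
of `M₁`, and `Sum.inr (i, θ, s)` is the copy of the positive rule `θ` of `M₁` in the
history alphabet `X_{i,ℓ}` (if `s = false`) or `X_{i,r}` (if `s = true`). -/
abbrev A2 (Y Θ : Type) := Y ⊕ (ℤ × Θ × Bool)

/-- The hardware of the `S`-machine `M₂` built from an `S`-machine `M₁` with standard
base `Q_0 Q_1 … Q_n`, state letters `Q` (`partQ q` is the index of the part of `q`),
tape letters `Y` (`secY y = i` means `y ∈ Y_{i+1}`, the alphabet of the sector
`Q_i Q_{i+1}`), and positive rules `Θ`.  The state letter `(q, true)` is the copy of `q`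
in `Q_{i,r}` (position `2i`) and `(q, false)` is its copy in `Q_{i,ℓ}` (position
`2i − 1`); the history sector `Q_{i,ℓ} Q_{i,r}` (positions `2i − 1`, `2i`) has alphabet
`X_i = X_{i,ℓ} ⊔ X_{i,r}`, `1 ≤ i ≤ n − 1`, and the working sector
`Q_{i,r} Q_{i+1,ℓ}` has alphabet `Y_{i+1}`. -/
@[reducible] def hw (Q Y Θ : Type) (partQ : Q → ℤ) (secY : Y → ℤ) (n : ℕ) : SM.Hardware where
  Q := Q × Bool
  A := A2 Y Θ
  part := fun x => if x.2 then 2 * partQ x.1 else 2 * partQ x.1 - 1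
  sec := fun l =>
    match l with
    | Sum.inl y => 2 * secY y
    | Sum.inr z => if 1 ≤ z.1 ∧ z.1 ≤ (n : ℤ) - 1 then 2 * z.1 - 1 else -3

variable {Q Y Θ : Type}

/-- the state letters of a rule of `M₂` obtained from the assignment `q : ℤ → Q` of
state letters of a rule of `M₁` -/
def q2 (q : Θ → ℤ → Q) (θ : Θ) : ℤ → Q × Bool := fun p =>
  if p % 2 = 0 then (q θ (p / 2), true) else (q θ ((p + 1) / 2), false)

/-- the left words of the positive rule `θ_h` of `M₂`: the part of `θ_h` at `Q_{i,r}` is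
`q_{i,r} → h̄_{θ,i} q'_{i,r} b_i` and the part at `Q_{i,ℓ}` is
`q_{i,ℓ} → a_i q'_{i,ℓ} h_{θ,i}⁻¹` -/
def posA (wa : Θ → ℤ → FreeGroup Y) (n : ℕ) (θ : Θ) : ℤ → FreeGroup (A2 Y Θ) :=
  fun p =>
    if p % 2 = 0 then
      (if 1 ≤ p / 2 ∧ p / 2 ≤ (n : ℤ) - 1 then
        FreeGroup.of (Sum.inr (p / 2, θ, true)) else 1)
    else FreeGroup.map Sum.inl (wa θ ((p + 1) / 2))

/-- the right words of the positive rule `θ_h` of `M₂` -/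
def posB (wb : Θ → ℤ → FreeGroup Y) (n : ℕ) (θ : Θ) : ℤ → FreeGroup (A2 Y Θ) :=
  fun p =>
    if p % 2 = 0 then FreeGroup.map Sum.inl (wb θ (p / 2))
    else
      (if 1 ≤ (p + 1) / 2 ∧ (p + 1) / 2 ≤ (n : ℤ) - 1 then
        (FreeGroup.of (Sum.inr ((p + 1) / 2, θ, false)))⁻¹ else 1)

/-- The rules of `M₂`: for every positive rule `θ` of `M₁` (with components
`q_i → (wa θ i) q_i' (wb θ i)`, source letters `src θ i` and target letters `tgt θ i`),
`M₂` has the rule `θ_h = (θ, true)` and its inverse `(θ, false)`; `Y_j(θ_h) = Y_j` for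
every `j` (no tape letters are forbidden). -/
def rule2 (partQ : Q → ℤ) (secY : Y → ℤ) (n : ℕ) (src tgt : Θ → ℤ → Q)
    (wa wb : Θ → ℤ → FreeGroup Y) :
    Θ × Bool → SM.Rule (hw Q Y Θ partQ secY n) := fun r =>
  if r.2 then
    { src := q2 src r.1, tgt := q2 tgt r.1,
      a := posA wa n r.1, b := posB wb n r.1, allow := fun _ => True }
  else
    { src := q2 tgt r.1, tgt := q2 src r.1,
      a := fun p => (posA wa n r.1 p)⁻¹, b := fun p => (posB wb n r.1 p)⁻¹,
      allow := fun _ => True }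

end M2


set_option linter.unusedSectionVars false

namespace WVAux
open FreeGroup

variable {α β : Type} [DecidableEq α] [DecidableEq β]

lemma norm_prod_le (f : α → FreeGroup β) (hf : ∀ a, norm (f a) ≤ 1) :
    ∀ L : List (α × Bool), norm (L.map fun p => cond p.2 (f p.1) (f p.1)⁻¹).prod ≤ L.length := by
  intro L
  induction L with
  | nil => simp [FreeGroup.norm_one]
  | cons a L ih =>
    simp only [List.map_cons, List.prod_cons, List.length_cons]
    calc norm (cond a.2 (f a.1) (f a.1)⁻¹ * (L.map fun p => cond p.2 (f p.1) (f p.1)⁻¹).prod)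
        ≤ norm (cond a.2 (f a.1) (f a.1)⁻¹) + norm (L.map fun p => cond p.2 (f p.1) (f p.1)⁻¹).prod :=
          norm_mul_le _ _
      _ ≤ 1 + L.length := by
          refine Nat.add_le_add ?_ ih
          cases a.2 <;> simp [norm_inv_eq, hf]
      _ = L.length + 1 := Nat.add_comm _ _

lemma lift_norm_le (f : α → FreeGroup β) (hf : ∀ a, norm (f a) ≤ 1) (x : FreeGroup α) :
    norm (lift f x) ≤ norm x := by
  conv_lhs => rw [← mk_toWord (x := x)]
  rw [lift_mk]
  exact norm_prod_le f hf x.toWord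

lemma lift_eq_one (f : α → FreeGroup β) (x : FreeGroup α)
    (h : ∀ l ∈ x.toWord, f l.1 = 1) : lift f x = 1 := by
  conv_lhs => rw [← mk_toWord (x := x)]
  rw [lift_mk]
  apply List.prod_eq_one
  intro y hy
  simp only [List.mem_map] at hy
  obtain ⟨p, hp, rfl⟩ := hy
  rw [h p hp]
  cases p.2 <;> simp

lemma reduce_cons_eq {x : α × Bool} {L : List (α × Bool)} (hL : reduce L = L)
    (hx : ∀ y ∈ L.head?, ¬(x.1 = y.1 ∧ x.2 = !y.2)) : reduce (x :: L) = x :: L := by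
  rw [reduce.cons, hL]
  cases L with
  | nil => rfl
  | cons y L' =>
    have := hx y (by simp)
    simp only [if_neg this]

lemma chain_norm {Θ : Type} [DecidableEq Θ] (t : ℕ) (hist : Fin t → Θ × Bool)
    (hred : ∀ (i : ℕ) (hi : i + 1 < t),
      hist ⟨i + 1, hi⟩ ≠ ((hist ⟨i, Nat.lt_of_succ_lt hi⟩).1, !(hist ⟨i, Nat.lt_of_succ_lt hi⟩).2))
    (u : ∀ s : ℕ, s ≤ t → FreeGroup Θ) (hu0 : u 0 (Nat.zero_le t) = 1)
    (hu : ∀ (s : ℕ) (hs : s < t) (hs1 : s + 1 ≤ t) (hs0 : s ≤ t),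
      u (s + 1) hs1 = mk [((hist ⟨s, hs⟩).1, !(hist ⟨s, hs⟩).2)] * u s hs0) :
    norm (u t le_rfl) = t := by
  suffices H : ∀ s (hs : s ≤ t), ∃ L : List (Θ × Bool), reduce L = L ∧ L.length = s ∧ u s hs = mk L ∧
      ∀ (s' : ℕ) (h' : s' < t), s = s' + 1 →
        L.head? = some ((hist ⟨s', h'⟩).1, !(hist ⟨s', h'⟩).2) by
    obtain ⟨L, h1, h2, h3, -⟩ := H t le_rfl
    rw [h3]
    show (mk L).toWord.length = t
    rw [toWord_mk, h1, h2]
  intro s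
  induction s with
  | zero =>
    intro hs
    exact ⟨[], rfl, rfl, by rw [show u 0 hs = u 0 (Nat.zero_le t) from rfl, hu0, one_eq_mk], by omega⟩
  | succ s ih =>
    intro hst
    obtain ⟨L, h1, h2, h3, h4⟩ := ih (by omega)
    have hs : s < t := by omega
    refine ⟨((hist ⟨s, hs⟩).1, !(hist ⟨s, hs⟩).2) :: L, ?_, by simp [h2], ?_, ?_⟩
    · apply reduce_cons_eq h1
      intro y hy hcon
      cases L with
      | nil => simp at hy
      | cons z L' =>
        simp only [List.head?_cons, Option.mem_def, Option.some.injEq] at hy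
        subst hy
        have hsz : s = L'.length + 1 := by simpa using h2.symm
        have hz := h4 L'.length (by omega) hsz
        simp only [List.head?_cons, Option.some.injEq] at hz
        rw [hz] at hcon
        obtain ⟨hc1, hc2⟩ := hcon
        simp only [] at hc1 hc2
        have hL' : L'.length + 1 < t := by omega
        apply hred L'.length hL'
        have : (⟨L'.length + 1, hL'⟩ : Fin t) = ⟨s, hs⟩ := by
          simp only [Fin.mk.injEq]; omega
        rw [this]
        ext
        · exact hc1
        · simp only [Bool.not_not] at hc2
          simpa using hc2
    · rw [hu s hs hst (by omega), h3, mul_mk]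
      rfl
    · intro s' h' heq
      have : s' = s := by omega
      subst this
      rfl

end WVAux


private def fhist {Y Θ : Type} (b : Bool) : M2.A2 Y Θ → FreeGroup Θ
  | Sum.inr (_, θ, s) => if s = b then FreeGroup.of θ else 1
  | Sum.inl _ => 1

section StepLemmas

open SM M2

variable {Q Y Θ : Type} [DecidableEq Y] [DecidableEq Θ]
  {n : ℕ} {partQ : Q → ℤ} {secY : Y → ℤ} {src tgt : Θ → ℤ → Q}
  {wa wb : Θ → ℤ → FreeGroup Y}

set_option maxHeartbeats 1000000 in
private lemma norm_mapinl (u : FreeGroup Y) :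
    FreeGroup.norm (FreeGroup.map (Sum.inl : Y → A2 Y Θ) u) ≤ FreeGroup.norm u := by
  rw [FreeGroup.map_eq_lift]
  exact WVAux.lift_norm_le _ (fun a => le_of_eq (FreeGroup.norm_of _)) _

set_option maxHeartbeats 1000000 in
private lemma norm_posA (hwa1 : ∀ θ p, FreeGroup.norm (wa θ p) ≤ 1) (θ : Θ) (p : ℤ) :
    FreeGroup.norm (posA wa n θ p) ≤ 1 := by
  unfold M2.posA
  split
  · split
    · exact le_of_eq (FreeGroup.norm_of _)
    · simp [FreeGroup.norm_one]
  · exact le_trans (norm_mapinl _) (hwa1 _ _)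

set_option maxHeartbeats 1000000 in
private lemma norm_posB (hwb1 : ∀ θ p, FreeGroup.norm (wb θ p) ≤ 1) (θ : Θ) (p : ℤ) :
    FreeGroup.norm (posB wb n θ p) ≤ 1 := by
  unfold M2.posB
  split
  · exact le_trans (norm_mapinl _) (hwb1 _ _)
  · split
    · rw [FreeGroup.norm_inv_eq]; exact le_of_eq (FreeGroup.norm_of _)
    · simp [FreeGroup.norm_one]

set_option maxHeartbeats 1000000 in
private lemma norm_RL (hwa1 : ∀ θ p, FreeGroup.norm (wa θ p) ≤ 1)
    (hwb1 : ∀ θ p, FreeGroup.norm (wb θ p) ≤ 1)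
    (r : Θ × Bool) (x : (hw Q Y Θ partQ secY n).Q × Bool) :
    FreeGroup.norm (SM.Rmul (rule2 partQ secY n src tgt wa wb r) x) ≤ 1 ∧
    FreeGroup.norm (SM.Lmul (rule2 partQ secY n src tgt wa wb r) x) ≤ 1 := by
  obtain ⟨θ, b⟩ := r
  have ha : ∀ p, FreeGroup.norm ((rule2 partQ secY n src tgt wa wb (θ, b)).a p) ≤ 1 := by
    intro p
    cases b
    · show FreeGroup.norm ((posA wa n θ p)⁻¹) ≤ 1
      rw [FreeGroup.norm_inv_eq]; exact norm_posA hwa1 θ p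
    · exact norm_posA hwa1 θ p
  have hb : ∀ p, FreeGroup.norm ((rule2 partQ secY n src tgt wa wb (θ, b)).b p) ≤ 1 := by
    intro p
    cases b
    · show FreeGroup.norm ((posB wb n θ p)⁻¹) ≤ 1
      rw [FreeGroup.norm_inv_eq]; exact norm_posB hwb1 θ p
    · exact norm_posB hwb1 θ p
  constructor
  · unfold SM.Rmul; split
    · exact hb _
    · rw [FreeGroup.norm_inv_eq]; exact ha _
  · unfold SM.Lmul; split
    · exact ha _
    · rw [FreeGroup.norm_inv_eq]; exact hb _

set_option maxHeartbeats 1000000 in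
private lemma step_len (hwa1 : ∀ θ p, FreeGroup.norm (wa θ p) ≤ 1)
    (hwb1 : ∀ θ p, FreeGroup.norm (wb θ p) ≤ 1)
    (r : Θ × Bool) {k : ℕ} (V V' : SM.Conf (hw Q Y Θ partQ secY n) k)
    (happ : SM.Apply (rule2 partQ secY n src tgt wa wb r) V V') :
    SM.lenY V ≤ SM.lenY V' + 2 * k := by
  obtain ⟨-, -, -, hw4⟩ := happ
  have hterm : ∀ i : Fin k, (V.w i).toWord.length ≤ (V'.w i).toWord.length + 2 := by
    intro i
    have h4 := hw4 i
    have heq : V.w i =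
        (SM.Rmul (rule2 partQ secY n src tgt wa wb r) (V.st i.castSucc))⁻¹ * V'.w i *
        (SM.Lmul (rule2 partQ secY n src tgt wa wb r) (V.st i.succ))⁻¹ := by
      rw [h4]; group
    have hR := (norm_RL (src := src) (tgt := tgt) hwa1 hwb1 r (V.st i.castSucc)).1
    have hL := (norm_RL (src := src) (tgt := tgt) hwa1 hwb1 r (V.st i.succ)).2
    calc (V.w i).toWord.length = FreeGroup.norm (V.w i) := rfl
      _ ≤ FreeGroup.norm
            ((SM.Rmul (rule2 partQ secY n src tgt wa wb r) (V.st i.castSucc))⁻¹ * V'.w i) +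
          FreeGroup.norm ((SM.Lmul (rule2 partQ secY n src tgt wa wb r) (V.st i.succ))⁻¹) := by
          rw [heq]; exact FreeGroup.norm_mul_le _ _
      _ ≤ (FreeGroup.norm ((SM.Rmul (rule2 partQ secY n src tgt wa wb r) (V.st i.castSucc))⁻¹) +
          FreeGroup.norm (V'.w i)) +
          FreeGroup.norm ((SM.Lmul (rule2 partQ secY n src tgt wa wb r) (V.st i.succ))⁻¹) :=
          Nat.add_le_add_right (FreeGroup.norm_mul_le _ _) _
      _ ≤ (V'.w i).toWord.length + 2 := by
          rw [FreeGroup.norm_inv_eq, FreeGroup.norm_inv_eq]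
          have h5 : FreeGroup.norm (V'.w i) = (V'.w i).toWord.length := rfl
          omega
  simp only [SM.lenY]
  calc ∑ i : Fin k, (V.w i).toWord.length
      ≤ ∑ i : Fin k, ((V'.w i).toWord.length + 2) := Finset.sum_le_sum (fun i _ => hterm i)
    _ = (∑ i : Fin k, (V'.w i).toWord.length) + 2 * k := by
        rw [Finset.sum_add_distrib, Finset.sum_const, Finset.card_univ]
        simp [Fintype.card_fin, mul_comm]

set_option maxHeartbeats 1000000 in
private lemma step_hist {i0 : ℤ} (hn : 1 ≤ n) (hi1 : 1 ≤ i0) (hi2 : i0 ≤ (n : ℤ) - 1)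
    (hsrc : ∀ θ p, 0 ≤ p → p ≤ (n : ℤ) → partQ (src θ p) = p)
    (htgt : ∀ θ p, 0 ≤ p → p ≤ (n : ℤ) → partQ (tgt θ p) = p)
    (r : Θ × Bool) {k : ℕ} (V V' : SM.Conf (hw Q Y Θ partQ secY n) k) (j : Fin k)
    (happ : SM.Apply (rule2 partQ secY n src tgt wa wb r) V V')
    (qa qb : Q) (hqa : partQ qa = i0) (hqb : partQ qb = i0)
    (hsta : V.st j.castSucc = ((qa, false), true))
    (hstb : V.st j.succ = ((qb, true), true)) :
    (∃ qa', partQ qa' = i0 ∧ V'.st j.castSucc = ((qa', false), true)) ∧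
    (∃ qb', partQ qb' = i0 ∧ V'.st j.succ = ((qb', true), true)) ∧
    V'.w j =
      (if r.2 then (FreeGroup.of (Sum.inr (i0, r.1, false) : A2 Y Θ))⁻¹
        else FreeGroup.of (Sum.inr (i0, r.1, false) : A2 Y Θ)) * V.w j *
      (if r.2 then FreeGroup.of (Sum.inr (i0, r.1, true) : A2 Y Θ)
        else (FreeGroup.of (Sum.inr (i0, r.1, true) : A2 Y Θ))⁻¹) := by
  have hq2L : ∀ (g : Θ → ℤ → Q) (θ : Θ), q2 g θ (2 * i0 - 1) = (g θ i0, false) := by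
    intro g θ
    unfold M2.q2
    rw [if_neg (by omega), show (2 * i0 - 1 + 1) / 2 = i0 by omega]
  have hq2R : ∀ (g : Θ → ℤ → Q) (θ : Θ), q2 g θ (2 * i0) = (g θ i0, true) := by
    intro g θ
    unfold M2.q2
    rw [if_pos (by omega), show (2 * i0) / 2 = i0 by omega]
  have hpB : ∀ θ₁ : Θ, posB wb n θ₁ (2 * i0 - 1)
      = (FreeGroup.of (Sum.inr (i0, θ₁, false) : A2 Y Θ))⁻¹ := by
    intro θ₁
    unfold M2.posB
    rw [if_neg (by omega), show (2 * i0 - 1 + 1) / 2 = i0 by omega, if_pos ⟨hi1, hi2⟩]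
  have hpA : ∀ θ₁ : Θ, posA wa n θ₁ (2 * i0)
      = FreeGroup.of (Sum.inr (i0, θ₁, true) : A2 Y Θ) := by
    intro θ₁
    unfold M2.posA
    rw [if_pos (by omega), show (2 * i0) / 2 = i0 by omega, if_pos ⟨hi1, hi2⟩]
  obtain ⟨-, hst, -, hw4⟩ := happ
  have h1 := hst j.castSucc
  have h2 := hst j.succ
  have h4 := hw4 j
  simp only [hsta, hstb, Bool.false_eq_true, if_false, if_true, hqa, hqb] at h1 h2
  simp only [SM.Rmul, SM.Lmul, hsta, hstb, M2.hw, Bool.false_eq_true, if_false, if_true,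
    hqa, hqb] at h4
  obtain ⟨θ₁, b₁⟩ := r
  cases b₁
  · refine ⟨⟨src θ₁ i0, hsrc θ₁ i0 (by omega) (by omega), ?_⟩,
      ⟨src θ₁ i0, hsrc θ₁ i0 (by omega) (by omega), ?_⟩, ?_⟩
    · rw [h1]
      show (q2 src θ₁ (2 * i0 - 1), true) = _
      rw [hq2L]
    · rw [h2]
      show (q2 src θ₁ (2 * i0), true) = _
      rw [hq2R]
    · rw [h4]
      show (posB wb n θ₁ (2 * i0 - 1))⁻¹ * V.w j * (posA wa n θ₁ (2 * i0))⁻¹ = _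
      rw [hpA, hpB, if_neg (by simp), if_neg (by simp), inv_inv]
  · refine ⟨⟨tgt θ₁ i0, htgt θ₁ i0 (by omega) (by omega), ?_⟩,
      ⟨tgt θ₁ i0, htgt θ₁ i0 (by omega) (by omega), ?_⟩, ?_⟩
    · rw [h1]
      show (q2 tgt θ₁ (2 * i0 - 1), true) = _
      rw [hq2L]
    · rw [h2]
      show (q2 tgt θ₁ (2 * i0), true) = _
      rw [hq2R]
    · rw [h4]
      show posB wb n θ₁ (2 * i0 - 1) * V.w j * posA wa n θ₁ (2 * i0) = _
      rw [hpA, hpB, if_pos rfl, if_pos rfl]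

end StepLemmas


set_option maxHeartbeats 1000000 in
open SM M2 in
private lemma key_len {Q Y Θ : Type} [DecidableEq Y] [DecidableEq Θ]
    {n : ℕ} {partQ : Q → ℤ} {secY : Y → ℤ} {k t : ℕ}
    (W : Fin (t + 1) → SM.Conf (M2.hw Q Y Θ partQ secY n) k)
    (hist : Fin t → Θ × Bool)
    (hred : ∀ (i : ℕ) (hi : i + 1 < t),
      hist ⟨i + 1, hi⟩ ≠ ((hist ⟨i, Nat.lt_of_succ_lt hi⟩).1, !(hist ⟨i, Nat.lt_of_succ_lt hi⟩).2))
    (j : Fin k) (i0 : ℤ)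
    (hwrec : ∀ (s : ℕ) (hs : s < t),
      (W ⟨s + 1, by omega⟩).w j =
        (if (hist ⟨s, hs⟩).2 then
            (FreeGroup.of (Sum.inr (i0, (hist ⟨s, hs⟩).1, false) : M2.A2 Y Θ))⁻¹
          else FreeGroup.of (Sum.inr (i0, (hist ⟨s, hs⟩).1, false) : M2.A2 Y Θ)) *
        (W ⟨s, by omega⟩).w j *
        (if (hist ⟨s, hs⟩).2 then FreeGroup.of (Sum.inr (i0, (hist ⟨s, hs⟩).1, true) : M2.A2 Y Θ)
          else (FreeGroup.of (Sum.inr (i0, (hist ⟨s, hs⟩).1, true) : M2.A2 Y Θ))⁻¹))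
    (hX : (∀ l ∈ ((W ⟨0, by omega⟩).w j).toWord, ∀ z : ℤ × Θ × Bool,
            l.1 = Sum.inr z → z.2.2 ≠ false) ∨
          (∀ l ∈ ((W ⟨0, by omega⟩).w j).toWord, ∀ z : ℤ × Θ × Bool,
            l.1 = Sum.inr z → z.2.2 ≠ true)) :
    t ≤ SM.lenY (W ⟨t, by omega⟩) := by
  have hfnorm : ∀ (b : Bool) (a : A2 Y Θ), FreeGroup.norm (fhist (Θ := Θ) b a) ≤ 1 := by
    intro b a
    rcases a with y | ⟨i, θ, sb⟩
    · simp [fhist, FreeGroup.norm_one]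
    · by_cases h : sb = b <;> simp [fhist, h, FreeGroup.norm_of, FreeGroup.norm_one]
  have hofinv : ∀ θ₁ : Θ, (FreeGroup.of θ₁)⁻¹ = FreeGroup.mk [(θ₁, false)] := by
    intro θ₁
    rw [show FreeGroup.of θ₁ = FreeGroup.mk [(θ₁, true)] from rfl, FreeGroup.inv_mk]; rfl
  have hsum : FreeGroup.norm ((W ⟨t, by omega⟩).w j) ≤ SM.lenY (W ⟨t, by omega⟩) := by
    simp only [SM.lenY]
    exact Finset.single_le_sum
      (f := fun i => ((W ⟨t, by omega⟩).w i).toWord.length)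
      (fun i _ => Nat.zero_le _) (Finset.mem_univ j)
  cases hX with
  | inl hX =>
    have hu0 : FreeGroup.lift (fhist false) ((W ⟨0, by omega⟩).w j) = 1 := by
      apply WVAux.lift_eq_one
      intro l hl
      rcases hli : l.1 with y | ⟨i, θ, sb⟩
      · simp [fhist]
      · have := hX l hl (i, θ, sb) hli
        cases sb
        · simp at this
        · simp [fhist]
    have hurec : ∀ (s : ℕ) (hs : s < t),
        FreeGroup.lift (fhist false) ((W ⟨s + 1, by omega⟩).w j) =
          FreeGroup.mk [((hist ⟨s, hs⟩).1, !(hist ⟨s, hs⟩).2)] *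
          FreeGroup.lift (fhist false) ((W ⟨s, by omega⟩).w j) := by
      intro s hs
      rw [hwrec s hs]
      rcases hh : hist ⟨s, hs⟩ with ⟨θ₁, b₁⟩
      cases b₁
      · simp only [Bool.false_eq_true, if_false, map_mul, FreeGroup.lift_apply_of, map_inv,
          Bool.not_false]
        simp [fhist, show FreeGroup.of θ₁ = FreeGroup.mk [(θ₁, true)] from rfl]
      · simp only [if_true, map_mul, FreeGroup.lift_apply_of, map_inv, Bool.not_true]
        simp [fhist, hofinv]
    have hcn := WVAux.chain_norm t hist hred
      (fun s hs => FreeGroup.lift (fhist false) ((W ⟨s, Nat.lt_succ_of_le hs⟩).w j))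
      hu0 (fun s hs _ _ => hurec s hs)
    have hle := WVAux.lift_norm_le (fhist false) (hfnorm false) ((W ⟨t, by omega⟩).w j)
    calc t = FreeGroup.norm (FreeGroup.lift (fhist false) ((W ⟨t, by omega⟩).w j)) := hcn.symm
      _ ≤ SM.lenY (W ⟨t, by omega⟩) := le_trans hle hsum
  | inr hX =>
    have hu0 : (FreeGroup.lift (fhist true) ((W ⟨0, by omega⟩).w j))⁻¹ = 1 := by
      rw [inv_eq_one]
      apply WVAux.lift_eq_one
      intro l hl
      rcases hli : l.1 with y | ⟨i, θ, sb⟩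
      · simp [fhist]
      · have := hX l hl (i, θ, sb) hli
        cases sb
        · simp [fhist]
        · simp at this
    have hurec : ∀ (s : ℕ) (hs : s < t),
        (FreeGroup.lift (fhist true) ((W ⟨s + 1, by omega⟩).w j))⁻¹ =
          FreeGroup.mk [((hist ⟨s, hs⟩).1, !(hist ⟨s, hs⟩).2)] *
          (FreeGroup.lift (fhist true) ((W ⟨s, by omega⟩).w j))⁻¹ := by
      intro s hs
      rw [hwrec s hs]
      rcases hh : hist ⟨s, hs⟩ with ⟨θ₁, b₁⟩
      cases b₁
      · simp only [Bool.false_eq_true, if_false, map_mul, FreeGroup.lift_apply_of, map_inv,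
          Bool.not_false, mul_inv_rev]
        simp [fhist, mul_assoc, show FreeGroup.of θ₁ = FreeGroup.mk [(θ₁, true)] from rfl]
      · simp only [if_true, map_mul, FreeGroup.lift_apply_of, map_inv, Bool.not_true, mul_inv_rev]
        simp [fhist, mul_assoc, hofinv]
    have hcn := WVAux.chain_norm t hist hred
      (fun s hs => (FreeGroup.lift (fhist true) ((W ⟨s, Nat.lt_succ_of_le hs⟩).w j))⁻¹)
      hu0 (fun s hs _ _ => hurec s hs)
    rw [FreeGroup.norm_inv_eq] at hcn
    have hle := WVAux.lift_norm_le (fhist true) (hfnorm true) ((W ⟨t, by omega⟩).w j)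
    calc t = FreeGroup.norm (FreeGroup.lift (fhist true) ((W ⟨t, by omega⟩).w j)) := hcn.symm
      _ ≤ SM.lenY (W ⟨t, by omega⟩) := le_trans hle hsum

set_option maxHeartbeats 4000000 in
open SM M2 in
/-- Lemma `WV`: for every `N₀` there is a constant `c = c(N₀)` such that for every
reduced computation `W₀ → … → W_t` of the `S`-machine `M₂` whose first word `W₀` has no
letters from the alphabets `X_{i,ℓ}` (resp. from the alphabets `X_{i,r}`), whose base has
length at most `N₀`, and whose base contains a history subword `Q_{i,ℓ} Q_{i,r}`, one has
`|W₀|_Y ≤ c |W_t|_Y`.  The machine `M₁` is given by its standard base `Q_0 … Q_n`, state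
letters `Q`, tape letters `Y` and positive rules `Θ`, and satisfies property (**). -/
theorem m2_bounded_base_first_word_bound (N0 : ℕ) :
    ∃ c : ℕ,
      ∀ (Q Y Θ : Type) [DecidableEq Y] [DecidableEq Θ]
        (n : ℕ) (partQ : Q → ℤ) (secY : Y → ℤ)
        (src tgt : Θ → ℤ → Q) (wa wb : Θ → ℤ → FreeGroup Y),
      -- `M₁` is an `S`-machine with the standard base `Q_0 … Q_n`:
      1 ≤ n →
      (∀ q, 0 ≤ partQ q ∧ partQ q ≤ (n : ℤ)) →
      (∀ y, 0 ≤ secY y ∧ secY y ≤ (n : ℤ) - 1) →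
      (∀ θ p, 0 ≤ p → p ≤ (n : ℤ) → partQ (src θ p) = p) →
      (∀ θ p, 0 ≤ p → p ≤ (n : ℤ) → partQ (tgt θ p) = p) →
      (∀ θ p, ∀ l ∈ (wa θ p).toWord, secY l.1 = p - 1) →
      (∀ θ p, ∀ l ∈ (wb θ p).toWord, secY l.1 = p) →
      -- property (**) of `M₁`:
      (∀ θ : Θ, ∃ p0 : ℤ, (∀ p, p ≠ p0 → wa θ p = 1 ∧ wb θ p = 1) ∧
        (wa θ p0).toWord.length + (wb θ p0).toWord.length ≤ 1) →
      -- a reduced computation of `M₂` consisting of admissible words: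
      ∀ (k t : ℕ) (W : Fin (t + 1) → SM.Conf (hw Q Y Θ partQ secY n) k)
        (hist : Fin t → Θ × Bool),
      (∀ i : Fin t,
        SM.Apply (rule2 partQ secY n src tgt wa wb (hist i))
          (W i.castSucc) (W i.succ)) →
      (∀ i, SM.Admissible (hw Q Y Θ partQ secY n) (W i)) →
      (∀ (i : ℕ) (hi : i + 1 < t),
        hist ⟨i + 1, hi⟩ ≠ ((hist ⟨i, by omega⟩).1, !(hist ⟨i, by omega⟩).2)) →
      -- the base has length at most `N₀`:
      k + 1 ≤ N0 →
      -- the base contains a history subword `Q_{i₀,ℓ} Q_{i₀,r}`: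
      (∃ (j : Fin k) (i0 : ℤ), 1 ≤ i0 ∧ i0 ≤ (n : ℤ) - 1 ∧
        ((W 0).st j.castSucc).2 = true ∧ ((W 0).st j.succ).2 = true ∧
        ((W 0).st j.castSucc).1.2 = false ∧ ((W 0).st j.succ).1.2 = true ∧
        partQ ((W 0).st j.castSucc).1.1 = i0 ∧
        partQ ((W 0).st j.succ).1.1 = i0) →
      -- `W₀` has no letters from the left alphabets `X_{i,ℓ}`
      -- (resp. no letters from the right alphabets `X_{i,r}`):
      ((∀ (j : Fin k), ∀ l ∈ ((W 0).w j).toWord, ∀ z : ℤ × Θ × Bool,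
          l.1 = Sum.inr z → z.2.2 ≠ false) ∨
        (∀ (j : Fin k), ∀ l ∈ ((W 0).w j).toWord, ∀ z : ℤ × Θ × Bool,
          l.1 = Sum.inr z → z.2.2 ≠ true)) →
      SM.lenY (W 0) ≤ c * SM.lenY (W (Fin.last t)) := by
  classical
  refine ⟨2 * N0 + 1, ?_⟩
  intro Q Y Θ _ _ n partQ secY src tgt wa wb hn hpart hsec hsrc htgt hwal hwbl hstar
    k t W hist happ hadm hred hk hbase hX
  obtain ⟨j, i0, hi1, hi2, e1, e2, e3, e4, e5, e6⟩ := hbase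
  have h0 : (0 : Fin (t + 1)) = ⟨0, by omega⟩ := by simp [Fin.ext_iff]
  have hlast : Fin.last t = ⟨t, by omega⟩ := rfl
  have hwa1 : ∀ (θ : Θ) (p : ℤ), FreeGroup.norm (wa θ p) ≤ 1 := by
    intro θ p
    obtain ⟨p0, hp0, hp1⟩ := hstar θ
    by_cases h : p = p0
    · subst h; exact le_trans (Nat.le_add_right _ _) hp1
    · rw [(hp0 p h).1]; simp [FreeGroup.norm_one]
  have hwb1 : ∀ (θ : Θ) (p : ℤ), FreeGroup.norm (wb θ p) ≤ 1 := by
    intro θ p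
    obtain ⟨p0, hp0, hp1⟩ := hstar θ
    by_cases h : p = p0
    · subst h; exact le_trans (Nat.le_add_left _ _) hp1
    · rw [(hp0 p h).2]; simp [FreeGroup.norm_one]
  have hWeq : ∀ (s : ℕ) (hs : s < t),
      W (Fin.castSucc ⟨s, hs⟩) = W ⟨s, by omega⟩ ∧ W (Fin.succ ⟨s, hs⟩) = W ⟨s + 1, by omega⟩ :=
    fun s hs => ⟨congrArg W (Fin.ext (by simp)), congrArg W (Fin.ext (by simp))⟩
  -- the state invariant and word recurrence for the history sector
  have hstate : ∀ (s : ℕ) (hs : s ≤ t),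
      (∃ qa : Q, partQ qa = i0 ∧ (W ⟨s, by omega⟩).st j.castSucc = ((qa, false), true)) ∧
      (∃ qb : Q, partQ qb = i0 ∧ (W ⟨s, by omega⟩).st j.succ = ((qb, true), true)) := by
    intro s
    induction s with
    | zero =>
      intro _
      rw [← h0]
      exact ⟨⟨((W 0).st j.castSucc).1.1, e5, Prod.ext (Prod.ext rfl e3) e1⟩,
             ⟨((W 0).st j.succ).1.1, e6, Prod.ext (Prod.ext rfl e4) e2⟩⟩
    | succ s ih =>
      intro hs1
      obtain ⟨⟨qa, hqa, hsta⟩, ⟨qb, hqb, hstb⟩⟩ := ih (by omega)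
      have hs : s < t := by omega
      rw [← (hWeq s hs).1] at hsta hstb
      obtain ⟨g1, g2, -⟩ := step_hist hn hi1 hi2 hsrc htgt (hist ⟨s, hs⟩) _ _ j (happ ⟨s, hs⟩)
        qa qb hqa hqb hsta hstb
      rw [(hWeq s hs).2] at g1 g2
      exact ⟨g1, g2⟩
  have hwrec : ∀ (s : ℕ) (hs : s < t),
      (W ⟨s + 1, by omega⟩).w j =
        (if (hist ⟨s, hs⟩).2 then (FreeGroup.of (Sum.inr (i0, (hist ⟨s, hs⟩).1, false) : A2 Y Θ))⁻¹
          else FreeGroup.of (Sum.inr (i0, (hist ⟨s, hs⟩).1, false) : A2 Y Θ)) *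
        (W ⟨s, by omega⟩).w j *
        (if (hist ⟨s, hs⟩).2 then FreeGroup.of (Sum.inr (i0, (hist ⟨s, hs⟩).1, true) : A2 Y Θ)
          else (FreeGroup.of (Sum.inr (i0, (hist ⟨s, hs⟩).1, true) : A2 Y Θ))⁻¹) := by
    intro s hs
    obtain ⟨⟨qa, hqa, hsta⟩, ⟨qb, hqb, hstb⟩⟩ := hstate s (by omega)
    rw [← (hWeq s hs).1] at hsta hstb
    have hr := (step_hist hn hi1 hi2 hsrc htgt (hist ⟨s, hs⟩) _ _ j (happ ⟨s, hs⟩)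
      qa qb hqa hqb hsta hstb).2.2
    rw [(hWeq s hs).1, (hWeq s hs).2] at hr
    exact hr
  -- accumulated length bound
  have hchain : ∀ (s : ℕ) (_ : s ≤ t),
      SM.lenY (W ⟨0, by omega⟩) ≤ SM.lenY (W ⟨s, by omega⟩) + 2 * k * s := by
    intro s
    induction s with
    | zero => intro _; simp
    | succ s ih =>
      intro hs1
      have hs : s < t := by omega
      have hstep := step_len hwa1 hwb1 (hist ⟨s, hs⟩) _ _ (happ ⟨s, hs⟩)
      rw [(hWeq s hs).1, (hWeq s hs).2] at hstep
      calc SM.lenY (W ⟨0, by omega⟩) ≤ SM.lenY (W ⟨s, by omega⟩) + 2 * k * s := ih (by omega)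
        _ ≤ (SM.lenY (W ⟨s + 1, by omega⟩) + 2 * k) + 2 * k * s :=
            Nat.add_le_add_right hstep _
        _ = SM.lenY (W ⟨s + 1, by omega⟩) + 2 * k * (s + 1) := by ring
  -- the history sector of W_t has at least t letters
  have hkey : t ≤ SM.lenY (W ⟨t, by omega⟩) := by
    apply key_len W hist hred j i0 hwrec
    cases hX with
    | inl h => exact Or.inl (fun l hl => by rw [← h0] at hl; exact h j l hl)
    | inr h => exact Or.inr (fun l hl => by rw [← h0] at hl; exact h j l hl)
  have hfin := hchain t le_rfl
  have h2k : 2 * k * t ≤ 2 * N0 * SM.lenY (W ⟨t, by omega⟩) :=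
    Nat.mul_le_mul (by omega : 2 * k ≤ 2 * N0) hkey
  calc SM.lenY (W 0) = SM.lenY (W ⟨0, by omega⟩) := congrArg SM.lenY (congrArg W h0)
    _ ≤ SM.lenY (W ⟨t, by omega⟩) + 2 * k * t := hfin
    _ ≤ SM.lenY (W ⟨t, by omega⟩) + 2 * N0 * SM.lenY (W ⟨t, by omega⟩) :=
        Nat.add_le_add_left h2k _
    _ = (2 * N0 + 1) * SM.lenY (W ⟨t, by omega⟩) := by ring
    _ = (2 * N0 + 1) * SM.lenY (W (Fin.last t)) :=
        (congrArg (fun m => (2 * N0 + 1) * m) (congrArg SM.lenY (congrArg W hlast))).symm
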